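/- Let X be a compact Hausdorff topological space, let n ≥ 1, and let G be a dense additive subgroup of the normed space C(X, ℝ) of continuous real-valued functions on X with the supremum norm. Then the additive subgroup of C(Xⁿ, ℝ) generated by the elementary tensors (x₁, …, x_n) ↦ ∏_{i=1}^n g_i(x_i), where g₁, …, g_n range over G, is dense in C(Xⁿ, ℝ). -/

import Mathlib

theorem dense_subgroup_elementary_tensors
    (X : Type) [TopologicalSpace X] [CompactSpace X] [T2Space X]
    (n : ℕ) (hn : 1 ≤ n) (G : AddSubgroup C(X, ℝ))
    (hG : Dense (G : Set C(X, ℝ))) :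
    Dense ((AddSubgroup.closure
      {h : C((Fin n → X), ℝ) |
        ∃ g : Fin n → C(X, ℝ), (∀ i, g i ∈ G) ∧
          h = ∏ i, (g i).comp
            (⟨fun x => x i, continuous_apply i⟩ : C((Fin n → X), X))} :
        AddSubgroup C((Fin n → X), ℝ)) : Set C((Fin n → X), ℝ)) := by
  classical
  set π : (i : Fin n) → C((Fin n → X), X) :=
    fun i => ⟨fun x => x i, continuous_apply i⟩ with hπ
  set T : Set C((Fin n → X), ℝ) :=
    {h : C((Fin n → X), ℝ) |
      ∃ g : Fin n → C(X, ℝ), (∀ i, g i ∈ G) ∧ h = ∏ i, (g i).comp (π i)} with hT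
  set Φ : (Fin n → C(X, ℝ)) → C((Fin n → X), ℝ) :=
    fun g => ∏ i, (g i).comp (π i) with hΦ
  have hΦcont : Continuous Φ := by
    apply continuous_finset_prod
    intro i _
    exact (ContinuousMap.continuous_precomp (π i)).comp (continuous_apply i)
  set S : Set C((Fin n → X), ℝ) := Set.range Φ with hS
  -- Step 1: every elementary tensor lies in the closure of the subgroup generated by T
  have hSsub : S ⊆ closure ((AddSubgroup.closure T : AddSubgroup C((Fin n → X), ℝ)) :
      Set C((Fin n → X), ℝ)) := by
    rintro _ ⟨g, rfl⟩
    have hdense : Dense (Set.pi Set.univ (fun _ : Fin n => (G : Set C(X, ℝ)))) :=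
      dense_pi Set.univ fun _ _ => hG
    have hg : g ∈ closure (Set.pi Set.univ (fun _ : Fin n => (G : Set C(X, ℝ)))) :=
      hdense g
    have h1 : Φ g ∈ closure (Φ '' Set.pi Set.univ (fun _ : Fin n => (G : Set C(X, ℝ)))) :=
      image_closure_subset_closure_image hΦcont ⟨g, hg, rfl⟩
    refine closure_mono ?_ h1
    rintro _ ⟨g', hg', rfl⟩
    exact AddSubgroup.subset_closure ⟨g', fun i => hg' i (Set.mem_univ i), rfl⟩
  -- S is a submonoid
  have h1S : (1 : C((Fin n → X), ℝ)) ∈ S := ⟨fun _ => 1, by simp [hΦ]⟩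
  have hmulS : ∀ a ∈ S, ∀ b ∈ S, a * b ∈ S := by
    rintro _ ⟨g, rfl⟩ _ ⟨g', rfl⟩
    refine ⟨fun i => g i * g' i, ?_⟩
    simp only [hΦ, ContinuousMap.mul_comp, Finset.prod_mul_distrib]
  -- S is closed under real scalar multiplication
  have hsmulS : ∀ (c : ℝ), ∀ a ∈ S, c • a ∈ S := by
    rintro c _ ⟨g, rfl⟩
    have i0 : Fin n := ⟨0, hn⟩
    refine ⟨Function.update g i0 (c • g i0), ?_⟩
    ext x
    simp only [hΦ, ContinuousMap.prod_apply, ContinuousMap.comp_apply,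
      ContinuousMap.smul_apply, smul_eq_mul]
    have key : ∀ i, (Function.update g i0 (c • g i0) i) ((π i) x) =
        Function.update (fun i => g i ((π i) x)) i0 (c * g i0 ((π i0) x)) i := by
      intro i
      by_cases h : i = i0
      · subst h; simp
      · simp [Function.update_of_ne h]
    rw [Finset.prod_congr rfl fun i _ => key i,
      Finset.prod_update_of_mem (Finset.mem_univ i0),
      Finset.prod_eq_mul_prod_sdiff_singleton_of_mem (Finset.mem_univ i0)
        (fun i => g i ((π i) x))]
    ring
  -- the ℝ-span of S is contained in the additive subgroup generated by S
  have hspan : (Submodule.span ℝ S : Set C((Fin n → X), ℝ)) ⊆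
      ((AddSubgroup.closure S : AddSubgroup C((Fin n → X), ℝ)) :
        Set C((Fin n → X), ℝ)) := by
    intro x hx
    induction hx using Submodule.span_induction with
    | mem x h => exact AddSubgroup.subset_closure h
    | zero => exact AddSubgroup.zero_mem _
    | add x y hx hy hx' hy' => exact AddSubgroup.add_mem _ hx' hy'
    | smul c x hx hx' =>
      clear hx
      induction hx' using AddSubgroup.closure_induction with
      | mem y hy => exact AddSubgroup.subset_closure (hsmulS c y hy)
      | zero => simpa using AddSubgroup.zero_mem (AddSubgroup.closure S)
      | add a b _ _ ha hb => rw [smul_add]; exact AddSubgroup.add_mem _ ha hb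
      | neg a _ ha => rw [smul_neg]; exact AddSubgroup.neg_mem _ ha
  -- the additive subgroup generated by S lies in the closure of the subgroup generated by T
  have hSclos : ((AddSubgroup.closure S : AddSubgroup C((Fin n → X), ℝ)) :
      Set C((Fin n → X), ℝ)) ⊆
      closure ((AddSubgroup.closure T : AddSubgroup C((Fin n → X), ℝ)) :
        Set C((Fin n → X), ℝ)) := by
    have : AddSubgroup.closure S ≤ (AddSubgroup.closure T).topologicalClosure :=
      AddSubgroup.closure_le _ |>.mpr hSsub
    exact this
  -- the ℝ-subalgebra generated by S is the span of S
  have hadj : (Algebra.adjoin ℝ S : Set C((Fin n → X), ℝ)) =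
      (Submodule.span ℝ S : Set C((Fin n → X), ℝ)) := by
    have hM : (Submonoid.closure S : Set C((Fin n → X), ℝ)) = S := by
      refine le_antisymm ?_ Submonoid.subset_closure
      intro x hx
      induction hx using Submonoid.closure_induction with
      | mem y hy => exact hy
      | one => exact h1S
      | mul a b _ _ ha hb => exact hmulS a ha b hb
    have := Algebra.adjoin_eq_span (R := ℝ) (s := S)
    have h2 : (Algebra.adjoin ℝ S : Set C((Fin n → X), ℝ)) =
        (Submodule.span ℝ ((Submonoid.closure S : Submonoid C((Fin n → X), ℝ)) :
          Set C((Fin n → X), ℝ)) : Set C((Fin n → X), ℝ)) := by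
      rw [← this]; rfl
    rw [h2, hM]
  -- the subalgebra generated by S separates points
  have hsep : (Algebra.adjoin ℝ S).SeparatesPoints := by
    intro x y hxy
    obtain ⟨i, hi⟩ : ∃ i, x i ≠ y i := by
      by_contra h
      push_neg at h
      exact hxy (funext h)
    obtain ⟨f, hf0, hf1, -⟩ := exists_continuous_zero_one_of_isClosed
      (isClosed_singleton (x := x i)) (isClosed_singleton (x := y i))
      (by simpa [Set.disjoint_singleton] using hi)
    set g : Fin n → C(X, ℝ) := fun j => if j = i then f else 1 with hg
    refine ⟨Φ g, ⟨Φ g, Algebra.subset_adjoin ⟨g, rfl⟩, rfl⟩, ?_⟩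
    have hx : Φ g x = 0 := by
      simp only [hΦ, ContinuousMap.prod_apply, ContinuousMap.comp_apply]
      refine Finset.prod_eq_zero (Finset.mem_univ i) ?_
      have hpx : (π i) x = x i := rfl
      simp [hg, hpx, hf0 rfl]
    have hy : Φ g y = 1 := by
      simp only [hΦ, ContinuousMap.prod_apply, ContinuousMap.comp_apply]
      refine Finset.prod_eq_one fun j _ => ?_
      by_cases h : j = i
      · subst h
        have hpy : (π j) y = y j := rfl
        simp [hg, hpy, hf1 rfl]
      · simp [hg, h]
    rw [hx, hy]; norm_num
  -- Stone–Weierstrass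
  have hdenseA : Dense ((Algebra.adjoin ℝ S : Subalgebra ℝ C((Fin n → X), ℝ)) :
      Set C((Fin n → X), ℝ)) := by
    have := ContinuousMap.subalgebra_topologicalClosure_eq_top_of_separatesPoints
      (Algebra.adjoin ℝ S) hsep
    rw [dense_iff_closure_eq]
    have h2 : closure ((Algebra.adjoin ℝ S : Subalgebra ℝ C((Fin n → X), ℝ)) :
        Set C((Fin n → X), ℝ)) =
        ((Algebra.adjoin ℝ S).topologicalClosure : Set C((Fin n → X), ℝ)) := rfl
    rw [h2, this]
    rfl
  -- conclude
  show Dense ((AddSubgroup.closure T : AddSubgroup C((Fin n → X), ℝ)) :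
    Set C((Fin n → X), ℝ))
  rw [dense_iff_closure_eq, ← Set.univ_subset_iff]
  calc Set.univ = closure ((Algebra.adjoin ℝ S : Subalgebra ℝ C((Fin n → X), ℝ)) :
        Set C((Fin n → X), ℝ)) := hdenseA.closure_eq.symm
    _ ⊆ closure (closure ((AddSubgroup.closure T : AddSubgroup C((Fin n → X), ℝ)) :
        Set C((Fin n → X), ℝ))) := by
        apply closure_mono
        rw [hadj]
        exact fun x hx => hSclos (hspan hx)
    _ = closure ((AddSubgroup.closure T : AddSubgroup C((Fin n → X), ℝ)) :
        Set C((Fin n → X), ℝ)) := closure_closure
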